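/- arXiv:1507.01249 — 10 statements merged into one kernel-verified Lean document; each statement's English description precedes it below -/
import Mathlib

section
/- Let R be a ring with 1 ≠ 0. If there exist elements r1, r2, d1, d2 in R with d1·r1 = 1, d2·r2 = 1, d1·r2 = 0, and d2·r1 = 0, then R is not Dedekind finite, i.e., there exist x, y in R with xy = 1 but yx ≠ 1. -/
theorem star_star_condition_implies_not_dedekind_finite (R : Type*) [Ring R]
    (hne : (1 : R) ≠ 0)
    (h : ∃ r1 r2 d1 d2 : R, d1 * r1 = 1 ∧ d2 * r2 = 1 ∧ d1 * r2 = 0 ∧ d2 * r1 = 0) :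
    ∃ x y : R, x * y = 1 ∧ y * x ≠ 1 := by
  obtain ⟨r1, r2, d1, d2, h11, h22, h12, h21⟩ := h
  refine ⟨d1, r1, h11, fun hyx => hne ?_⟩
  have hr2 : r2 = 0 := by
    calc r2 = (r1 * d1) * r2 := by rw [hyx, one_mul]
    _ = r1 * (d1 * r2) := by rw [mul_assoc]
    _ = 0 := by rw [h12, mul_zero]
  rw [← h22, hr2, mul_zero]
end

section
/- Let R be a ring with 1 and M a (left) R-module on which R acts faithfully (i.e., for all r, s in R, if r·m = s·m for all m in M then r = s). Then the following are equivalent: (i) there exist r1, r2, d1, d2 in R such that for all m1, m2 in M, d1·(r1·m1 + r2·m2) = m1 and d2·(r1·m1 + r2·m2) = m2; (ii) there exist r1, r2, d1, d2 in R with d1·r1 = 1, d2·r2 = 1, d1·r2 = 0, and d2·r1 = 0. -/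
theorem wingless_butterfly_module_iff_ring (R : Type*) [Ring R]
    (M : Type*) [AddCommGroup M] [Module R M]
    (hfaithful : ∀ r s : R, (∀ m : M, r • m = s • m) → r = s) :
    (∃ r1 r2 d1 d2 : R, ∀ m1 m2 : M,
        d1 • (r1 • m1 + r2 • m2) = m1 ∧ d2 • (r1 • m1 + r2 • m2) = m2) ↔
      (∃ r1 r2 d1 d2 : R, d1 * r1 = 1 ∧ d2 * r2 = 1 ∧ d1 * r2 = 0 ∧ d2 * r1 = 0) := by
  constructor
  · rintro ⟨r1, r2, d1, d2, h⟩
    refine ⟨r1, r2, d1, d2, ?_, ?_, ?_, ?_⟩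
    · apply hfaithful; intro m
      have := (h m 0).1; simpa [mul_smul] using this
    · apply hfaithful; intro m
      have := (h 0 m).2; simpa [mul_smul] using this
    · apply hfaithful; intro m
      have := (h 0 m).1; simpa [mul_smul] using this
    · apply hfaithful; intro m
      have := (h m 0).2; simpa [mul_smul] using this
  · rintro ⟨r1, r2, d1, d2, h11, h22, h12, h21⟩
    refine ⟨r1, r2, d1, d2, fun m1 m2 => ⟨?_, ?_⟩⟩
    · rw [smul_add, ← mul_smul, ← mul_smul, h11, h12, one_smul, zero_smul, add_zero]
    · rw [smul_add, ← mul_smul, ← mul_smul, h22, h21, one_smul, zero_smul, zero_add]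
end

section
/- Let R be a ring with 1 in which 1 + 1 = 0. Then there exist elements r14, r16, r24, r25, r26, r35, r36, r311, r47, r48, r58, r59, r67, r69, r610, r810, r811 in R satisfying the twelve equations: (1) r69·r16 = 1; (2) r810·r48·r14 + r610·r16 = 0; (3) r47·r14 + r67·r16 = 0; (4) r811·r48·r14 = 1; (5) r59·r25 + r69·r26 = 0; (6) r810·r48·r24 + r810·r58·r25 + r610·r26 = 1; (7) r47·r24 + r67·r26 = 0; (8) r811·r48·r24 + r811·r58·r25 = 0; (9) r59·r35 + r69·r36 = 0; (10) r610·r36 + r810·r58·r35 = 0; (11) r67·r36 = 1; (12) r811·r58·r35 + r311 = 0. In fact, taking every one of these elements equal to 1 gives a solution. -/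
theorem figure6_solvable_of_char_two (R : Type*) [Ring R] (h2 : (1 : R) + 1 = 0) :
    ∃ r14 r16 r24 r25 r26 r35 r36 r311 r47 r48 r58 r59 r67 r69 r610 r810 r811 : R,
      r69 * r16 = 1 ∧
      r810 * r48 * r14 + r610 * r16 = 0 ∧
      r47 * r14 + r67 * r16 = 0 ∧
      r811 * r48 * r14 = 1 ∧
      r59 * r25 + r69 * r26 = 0 ∧
      r810 * r48 * r24 + r810 * r58 * r25 + r610 * r26 = 1 ∧
      r47 * r24 + r67 * r26 = 0 ∧
      r811 * r48 * r24 + r811 * r58 * r25 = 0 ∧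
      r59 * r35 + r69 * r36 = 0 ∧
      r610 * r36 + r810 * r58 * r35 = 0 ∧
      r67 * r36 = 1 ∧
      r811 * r58 * r35 + r311 = 0 ∧
      -- the all-ones assignment is a solution
      (r14 = 1 ∧ r16 = 1 ∧ r24 = 1 ∧ r25 = 1 ∧ r26 = 1 ∧ r35 = 1 ∧ r36 = 1 ∧ r311 = 1 ∧
       r47 = 1 ∧ r48 = 1 ∧ r58 = 1 ∧ r59 = 1 ∧ r67 = 1 ∧ r69 = 1 ∧ r610 = 1 ∧
       r810 = 1 ∧ r811 = 1) := by
  refine ⟨1,1,1,1,1,1,1,1,1,1,1,1,1,1,1,1,1, ?_,?_,?_,?_,?_,?_,?_,?_,?_,?_,?_,?_,?_⟩ <;>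
    simp_all [h2, add_assoc]
end

section
/- Let R be a Dedekind finite ring with 1 (i.e., for all x, y in R, xy = 1 implies yx = 1). If there exist elements r14, r16, r24, r25, r26, r35, r36, r311, r47, r48, r58, r59, r67, r69, r610, r810, r811 in R satisfying the twelve equations: (1) r69·r16 = 1; (2) r810·r48·r14 + r610·r16 = 0; (3) r47·r14 + r67·r16 = 0; (4) r811·r48·r14 = 1; (5) r59·r25 + r69·r26 = 0; (6) r810·r48·r24 + r810·r58·r25 + r610·r26 = 1; (7) r47·r24 + r67·r26 = 0; (8) r811·r48·r24 + r811·r58·r25 = 0; (9) r59·r35 + r69·r36 = 0; (10) r610·r36 + r810·r58·r35 = 0; (11) r67·r36 = 1; (12) r811·r58·r35 + r311 = 0, then 1 + 1 = 0 in R. -/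
theorem figure6_solution_forces_char_two (R : Type*) [Ring R]
    (hDF : ∀ x y : R, x * y = 1 → y * x = 1)
    (h : ∃ r14 r16 r24 r25 r26 r35 r36 r311 r47 r48 r58 r59 r67 r69 r610 r810 r811 : R,
      r69 * r16 = 1 ∧
      r810 * r48 * r14 + r610 * r16 = 0 ∧
      r47 * r14 + r67 * r16 = 0 ∧
      r811 * r48 * r14 = 1 ∧
      r59 * r25 + r69 * r26 = 0 ∧
      r810 * r48 * r24 + r810 * r58 * r25 + r610 * r26 = 1 ∧
      r47 * r24 + r67 * r26 = 0 ∧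
      r811 * r48 * r24 + r811 * r58 * r25 = 0 ∧
      r59 * r35 + r69 * r36 = 0 ∧
      r610 * r36 + r810 * r58 * r35 = 0 ∧
      r67 * r36 = 1 ∧
      r811 * r58 * r35 + r311 = 0) :
    (1 : R) + 1 = 0 := by
  obtain ⟨r14, r16, r24, r25, r26, r35, r36, r311, r47, r48, r58, r59, r67, r69, r610,
    r810, r811, h1, h2, h3, h4, h5, h6, h7, h8, h9, h10, h11, h12⟩ := h
  -- basic invertibility facts from Dedekind finiteness
  have hba : r16 * r69 = 1 := hDF _ _ h1
  have hdc : r36 * r67 = 1 := hDF _ _ h11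
  have hvu : r14 * (r811 * r48) = 1 := hDF _ _ h4
  have h481 : r48 * r14 * r811 = 1 := hDF r811 (r48 * r14) (by rw [← mul_assoc]; exact h4)
  -- solved forms of the equations
  have h2' : r810 * r48 * r14 = -(r610 * r16) := eq_neg_of_add_eq_zero_left h2
  have h3' : r47 * r14 = -(r67 * r16) := eq_neg_of_add_eq_zero_left h3
  have h5' : r59 * r25 = -(r69 * r26) := eq_neg_of_add_eq_zero_left h5
  have h7' : r67 * r26 = -(r47 * r24) := eq_neg_of_add_eq_zero_right h7
  have h8' : r811 * r58 * r25 = -(r811 * r48 * r24) := eq_neg_of_add_eq_zero_right h8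
  have h9' : r59 * r35 = -(r69 * r36) := eq_neg_of_add_eq_zero_left h9
  have h10' : r610 * r36 = -(r810 * r58 * r35) := eq_neg_of_add_eq_zero_left h10
  -- r47 = -(r67 * r16 * (r811 * r48))
  have hA : r47 = -(r67 * (r16 * (r811 * r48))) := by
    calc r47 = r47 * (r14 * (r811 * r48)) := by rw [hvu, mul_one]
      _ = (r47 * r14) * (r811 * r48) := by rw [mul_assoc]
      _ = (-(r67 * r16)) * (r811 * r48) := by rw [h3']
      _ = -(r67 * (r16 * (r811 * r48))) := by noncomm_ring
  -- r26 = r16 * (r811 * r48) * r24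
  have h26 : r26 = r16 * (r811 * r48) * r24 := by
    calc r26 = (r36 * r67) * r26 := by rw [hdc, one_mul]
      _ = r36 * (r67 * r26) := by rw [mul_assoc]
      _ = r36 * (-(r47 * r24)) := by rw [h7']
      _ = r36 * (-((-(r67 * (r16 * (r811 * r48)))) * r24)) := by rw [hA]
      _ = (r36 * r67) * (r16 * (r811 * r48) * r24) := by noncomm_ring
      _ = r16 * (r811 * r48) * r24 := by rw [hdc, one_mul]
  -- r610 = -(r810 * (r58 * (r35 * r67)))
  have h610 : r610 = -(r810 * (r58 * (r35 * r67))) := by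
    calc r610 = r610 * (r36 * r67) := by rw [hdc, mul_one]
      _ = (r610 * r36) * r67 := by rw [mul_assoc]
      _ = (-(r810 * r58 * r35)) * r67 := by rw [h10']
      _ = -(r810 * (r58 * (r35 * r67))) := by noncomm_ring
  -- r810 * r48 = -(r610 * (r16 * (r811 * r48)))
  have s5 : r810 * r48 = -(r610 * (r16 * (r811 * r48))) := by
    calc r810 * r48 = (r810 * r48) * (r14 * (r811 * r48)) := by rw [hvu, mul_one]
      _ = (r810 * r48 * r14) * (r811 * r48) := by noncomm_ring
      _ = (-(r610 * r16)) * (r811 * r48) := by rw [h2']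
      _ = -(r610 * (r16 * (r811 * r48))) := by noncomm_ring
  -- from equation 6: r810 * r58 * r25 = 1
  have key6 : r810 * r58 * r25 = 1 := by
    have e : r810 * r48 * r24 + r810 * r58 * r25 + r610 * r26 = r810 * r58 * r25 := by
      rw [s5, h26]; noncomm_ring
    rw [← e]; exact h6
  have inv25a : r58 * r25 * r810 = 1 := hDF r810 (r58 * r25) (by rw [← mul_assoc]; exact key6)
  have inv25b : r25 * (r810 * r58) = 1 := hDF (r810 * r58) r25 key6
  -- r48 * r14 = r58 * (r35 * (r67 * r16))
  have s9 : r48 * r14 = r58 * (r35 * (r67 * r16)) := by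
    have t : r810 * (r48 * r14) = r810 * (r58 * (r35 * (r67 * r16))) := by
      rw [← mul_assoc r810 r48 r14, h2', h610]; noncomm_ring
    calc r48 * r14 = ((r58 * r25) * r810) * (r48 * r14) := by rw [inv25a, one_mul]
      _ = (r58 * r25) * (r810 * (r48 * r14)) := by rw [mul_assoc]
      _ = (r58 * r25) * (r810 * (r58 * (r35 * (r67 * r16)))) := by rw [t]
      _ = ((r58 * r25) * r810) * (r58 * (r35 * (r67 * r16))) := by rw [← mul_assoc]
      _ = r58 * (r35 * (r67 * r16)) := by rw [inv25a, one_mul]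
  -- r811 * (r58 * (r35 * (r67 * r16))) = 1
  have s10 : r811 * (r58 * (r35 * (r67 * r16))) = 1 := by
    apply hDF
    rw [← s9]; exact h481
  have inv_cb : r67 * r16 * (r69 * r36) = 1 := by
    rw [mul_assoc, ← mul_assoc r16, hba, one_mul, h11]
  -- r811 * (r58 * r35) = r69 * r36
  have hB : r811 * (r58 * r35) = r69 * r36 := by
    calc r811 * (r58 * r35) = r811 * (r58 * r35) * (r67 * r16 * (r69 * r36)) := by
          rw [inv_cb, mul_one]
      _ = (r811 * (r58 * (r35 * (r67 * r16)))) * (r69 * r36) := by noncomm_ring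
      _ = 1 * (r69 * r36) := by rw [s10]
      _ = r69 * r36 := one_mul _
  -- r59 * r25 = -(r811 * r48 * r24)
  have hC : r59 * r25 = -(r811 * r48 * r24) := by
    calc r59 * r25 = -(r69 * r26) := h5'
      _ = -(r69 * (r16 * (r811 * r48) * r24)) := by rw [h26]
      _ = -((r69 * r16) * (r811 * r48 * r24)) := by noncomm_ring
      _ = -(r811 * r48 * r24) := by rw [h1, one_mul]
  -- r59 = r811 * r58
  have s14 : r59 = r811 * r58 := by
    have e : r59 * r25 = r811 * r58 * r25 := by rw [hC, h8']
    calc r59 = r59 * (r25 * (r810 * r58)) := by rw [inv25b, mul_one]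
      _ = (r59 * r25) * (r810 * r58) := by rw [← mul_assoc]
      _ = (r811 * r58 * r25) * (r810 * r58) := by rw [e]
      _ = (r811 * r58) * (r25 * (r810 * r58)) := by noncomm_ring
      _ = r811 * r58 := by rw [inv25b, mul_one]
  -- conclude 2 * (r69 * r36) = 0
  have t1 : r59 * r35 = r69 * r36 := by rw [s14, mul_assoc]; exact hB
  rw [t1] at h9'
  have efin : r69 * r36 + r69 * r36 = 0 := eq_neg_iff_add_eq_zero.mp h9'
  have e36 : r36 + r36 = 0 := by
    calc r36 + r36 = 1 * r36 + 1 * r36 := by rw [one_mul]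
      _ = r16 * r69 * r36 + r16 * r69 * r36 := by rw [hba]
      _ = r16 * (r69 * r36 + r69 * r36) := by noncomm_ring
      _ = r16 * 0 := by rw [efin]
      _ = 0 := mul_zero _
  calc (1 : R) + 1 = r67 * r36 + r67 * r36 := by rw [h11]
    _ = r67 * (r36 + r36) := by noncomm_ring
    _ = r67 * 0 := by rw [e36]
    _ = 0 := mul_zero _
end

section
/- Let R be a ring with 1 in which the element 2 = 1 + 1 is invertible (a unit). Then there exist elements r41, r42, r43, r51, r52, r61, r63, r72, r73, r84, r85, r94, r96, r104, r107, r115, r116, r117 in R satisfying the twelve equations: (1) r104·r41 = 1; (2) r94·r42 = 1; (3) r84·r43 = 1; (4) r117·r73 + r116·r63 = 1; (5) r96·r61 + r94·r41 = 0; (6) r85·r51 + r84·r41 = 0; (7) r116·r61 + r115·r51 = 0; (8) r107·r72 + r104·r42 = 0; (9) r85·r52 + r84·r42 = 0; (10) r117·r72 + r115·r52 = 0; (11) r107·r73 + r104·r43 = 0; (12) r96·r63 + r94·r43 = 0. In fact, taking r41 = r51 = r61 = r42 = r52 = r72 = r43 = r63 = r73 = r84 = r94 = r104 = 1, r85 =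 r96 = r107 = -1, r116 = r117 = 2⁻¹, and r115 = -2⁻¹ gives a solution. -/
theorem figure8_solvable_of_two_invertible (R : Type*) [Ring R] (h2 : IsUnit (2 : R)) :
    ∃ r41 r42 r43 r51 r52 r61 r63 r72 r73 r84 r85 r94 r96 r104 r107 r115 r116 r117 : R,
      r104 * r41 = 1 ∧
      r94 * r42 = 1 ∧
      r84 * r43 = 1 ∧
      r117 * r73 + r116 * r63 = 1 ∧
      r96 * r61 + r94 * r41 = 0 ∧
      r85 * r51 + r84 * r41 = 0 ∧
      r116 * r61 + r115 * r51 = 0 ∧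
      r107 * r72 + r104 * r42 = 0 ∧
      r85 * r52 + r84 * r42 = 0 ∧
      r117 * r72 + r115 * r52 = 0 ∧
      r107 * r73 + r104 * r43 = 0 ∧
      r96 * r63 + r94 * r43 = 0 ∧
      -- the explicit assignment is a solution
      (∃ u : R, 2 * u = 1 ∧ u * 2 = 1 ∧
        r41 = 1 ∧ r51 = 1 ∧ r61 = 1 ∧ r42 = 1 ∧ r52 = 1 ∧ r72 = 1 ∧
        r43 = 1 ∧ r63 = 1 ∧ r73 = 1 ∧ r84 = 1 ∧ r94 = 1 ∧ r104 = 1 ∧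
        r85 = -1 ∧ r96 = -1 ∧ r107 = -1 ∧
        r116 = u ∧ r117 = u ∧ r115 = -u) := by
  obtain ⟨v, hv⟩ := h2
  refine ⟨1, 1, 1, 1, 1, 1, 1, 1, 1, 1, -1, 1, -1, 1, -1, -(↑v⁻¹ : R), ↑v⁻¹, ↑v⁻¹, ?_⟩
  have h1 : (2 : R) * ↑v⁻¹ = 1 := by rw [← hv]; exact_mod_cast v.mul_inv
  have h2' : (↑v⁻¹ : R) * 2 = 1 := by rw [← hv]; exact_mod_cast v.inv_mul
  refine ⟨by noncomm_ring, by noncomm_ring, by noncomm_ring, ?_, by noncomm_ring, by noncomm_ring, ?_, by noncomm_ring, by noncomm_ring, ?_,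
    by noncomm_ring, by noncomm_ring, ⟨↑v⁻¹, h1, h2', rfl, rfl, rfl, rfl, rfl, rfl, rfl, rfl, rfl, rfl,
      rfl, rfl, rfl, rfl, rfl, rfl, rfl, rfl⟩⟩
  · rw [← two_mul] at *; simpa using h1
  · noncomm_ring
  · noncomm_ring
end

section
/- Let R be a Dedekind finite ring with 1 (i.e., for all x, y in R, xy = 1 implies yx = 1). If there exist elements r41, r42, r43, r51, r52, r61, r63, r72, r73, r84, r85, r94, r96, r104, r107, r115, r116, r117 in R satisfying the twelve equations: (1) r104·r41 = 1; (2) r94·r42 = 1; (3) r84·r43 = 1; (4) r117·r73 + r116·r63 = 1; (5) r96·r61 + r94·r41 = 0; (6) r85·r51 + r84·r41 = 0; (7) r116·r61 + r115·r51 = 0; (8) r107·r72 + r104·r42 = 0; (9) r85·r52 + r84·r42 = 0; (10) r117·r72 + r115·r52 = 0; (11) r107·r73 + r104·r43 = 0; (12) r96·r63 + r94·r43 = 0, then the element 2 = 1 + 1 is invertible (a unit) in R. -/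
theorem figure8_solution_forces_two_invertible (R : Type*) [Ring R]
    (hDF : ∀ x y : R, x * y = 1 → y * x = 1)
    (h : ∃ r41 r42 r43 r51 r52 r61 r63 r72 r73 r84 r85 r94 r96 r104 r107 r115 r116 r117 : R,
      r104 * r41 = 1 ∧
      r94 * r42 = 1 ∧
      r84 * r43 = 1 ∧
      r117 * r73 + r116 * r63 = 1 ∧
      r96 * r61 + r94 * r41 = 0 ∧
      r85 * r51 + r84 * r41 = 0 ∧
      r116 * r61 + r115 * r51 = 0 ∧
      r107 * r72 + r104 * r42 = 0 ∧
      r85 * r52 + r84 * r42 = 0 ∧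
      r117 * r72 + r115 * r52 = 0 ∧
      r107 * r73 + r104 * r43 = 0 ∧
      r96 * r63 + r94 * r43 = 0) :
    IsUnit (2 : R) := by
  obtain ⟨r41, r42, r43, r51, r52, r61, r63, r72, r73, r84, r85, r94, r96, r104, r107, r115,
    r116, r117, h1, h2, h3, h4, h5, h6, h7, h8, h9, h10, h11, h12⟩ := h
  have h1' : r41 * r104 = 1 := hDF _ _ h1
  have h2' : r42 * r94 = 1 := hDF _ _ h2
  have h3' : r43 * r84 = 1 := hDF _ _ h3
  have e5 : r96 * r61 = -(r94 * r41) := eq_neg_of_add_eq_zero_left h5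
  have e6 : r85 * r51 = -(r84 * r41) := eq_neg_of_add_eq_zero_left h6
  have e7 : r116 * r61 = -(r115 * r51) := eq_neg_of_add_eq_zero_left h7
  have e8 : r107 * r72 = -(r104 * r42) := eq_neg_of_add_eq_zero_left h8
  have e9 : r85 * r52 = -(r84 * r42) := eq_neg_of_add_eq_zero_left h9
  have e10 : r117 * r72 = -(r115 * r52) := eq_neg_of_add_eq_zero_left h10
  have e11 : r107 * r73 = -(r104 * r43) := eq_neg_of_add_eq_zero_left h11
  have e12 : r96 * r63 = -(r94 * r43) := eq_neg_of_add_eq_zero_left h12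
  -- r96 * (r61*r104) = -r94 = r96 * (r63*r84)
  have a5 : r96 * (r61 * r104) = -r94 := by
    calc r96 * (r61 * r104) = (r96 * r61) * r104 := by noncomm_ring
      _ = -(r94 * (r41 * r104)) := by rw [e5]; noncomm_ring
      _ = -r94 := by rw [h1']; noncomm_ring
  have a12 : r96 * (r63 * r84) = -r94 := by
    calc r96 * (r63 * r84) = (r96 * r63) * r84 := by noncomm_ring
      _ = -(r94 * (r43 * r84)) := by rw [e12]; noncomm_ring
      _ = -r94 := by rw [h3']; noncomm_ring
  have w96 : r96 * (-(r61 * r104 * r42)) = 1 := by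
    calc r96 * (-(r61 * r104 * r42)) = -(r96 * (r61 * r104)) * r42 := by noncomm_ring
      _ = r94 * r42 := by rw [a5]; noncomm_ring
      _ = 1 := h2
  have w96' : (-(r61 * r104 * r42)) * r96 = 1 := hDF _ _ w96
  have c1 : r61 * r104 = r63 * r84 := by
    calc r61 * r104 = ((-(r61 * r104 * r42)) * r96) * (r61 * r104) := by rw [w96']; noncomm_ring
      _ = (-(r61 * r104 * r42)) * (r96 * (r61 * r104)) := by noncomm_ring
      _ = (-(r61 * r104 * r42)) * (r96 * (r63 * r84)) := by rw [a5, a12]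
      _ = ((-(r61 * r104 * r42)) * r96) * (r63 * r84) := by noncomm_ring
      _ = r63 * r84 := by rw [w96']; noncomm_ring
  -- r85 * (r51*r104) = -r84 = r85 * (r52*r94)
  have a6 : r85 * (r51 * r104) = -r84 := by
    calc r85 * (r51 * r104) = (r85 * r51) * r104 := by noncomm_ring
      _ = -(r84 * (r41 * r104)) := by rw [e6]; noncomm_ring
      _ = -r84 := by rw [h1']; noncomm_ring
  have a9 : r85 * (r52 * r94) = -r84 := by
    calc r85 * (r52 * r94) = (r85 * r52) * r94 := by noncomm_ring
      _ = -(r84 * (r42 * r94)) := by rw [e9]; noncomm_ring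
      _ = -r84 := by rw [h2']; noncomm_ring
  have w85 : r85 * (-(r51 * r104 * r43)) = 1 := by
    calc r85 * (-(r51 * r104 * r43)) = -(r85 * (r51 * r104)) * r43 := by noncomm_ring
      _ = r84 * r43 := by rw [a6]; noncomm_ring
      _ = 1 := h3
  have w85' : (-(r51 * r104 * r43)) * r85 = 1 := hDF _ _ w85
  have c2 : r51 * r104 = r52 * r94 := by
    calc r51 * r104 = ((-(r51 * r104 * r43)) * r85) * (r51 * r104) := by rw [w85']; noncomm_ring
      _ = (-(r51 * r104 * r43)) * (r85 * (r51 * r104)) := by noncomm_ring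
      _ = (-(r51 * r104 * r43)) * (r85 * (r52 * r94)) := by rw [a6, a9]
      _ = ((-(r51 * r104 * r43)) * r85) * (r52 * r94) := by noncomm_ring
      _ = r52 * r94 := by rw [w85']; noncomm_ring
  -- r107 * (r72*r94) = -r104 = r107 * (r73*r84)
  have a8 : r107 * (r72 * r94) = -r104 := by
    calc r107 * (r72 * r94) = (r107 * r72) * r94 := by noncomm_ring
      _ = -(r104 * (r42 * r94)) := by rw [e8]; noncomm_ring
      _ = -r104 := by rw [h2']; noncomm_ring
  have a11 : r107 * (r73 * r84) = -r104 := by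
    calc r107 * (r73 * r84) = (r107 * r73) * r84 := by noncomm_ring
      _ = -(r104 * (r43 * r84)) := by rw [e11]; noncomm_ring
      _ = -r104 := by rw [h3']; noncomm_ring
  have w107 : r107 * (-(r72 * r94 * r41)) = 1 := by
    calc r107 * (-(r72 * r94 * r41)) = -(r107 * (r72 * r94)) * r41 := by noncomm_ring
      _ = r104 * r41 := by rw [a8]; noncomm_ring
      _ = 1 := h1
  have w107' : (-(r72 * r94 * r41)) * r107 = 1 := hDF _ _ w107
  have c3 : r72 * r94 = r73 * r84 := by
    calc r72 * r94 = ((-(r72 * r94 * r41)) * r107) * (r72 * r94) := by rw [w107']; noncomm_ring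
      _ = (-(r72 * r94 * r41)) * (r107 * (r72 * r94)) := by noncomm_ring
      _ = (-(r72 * r94 * r41)) * (r107 * (r73 * r84)) := by rw [a8, a11]
      _ = ((-(r72 * r94 * r41)) * r107) * (r73 * r84) := by noncomm_ring
      _ = r73 * r84 := by rw [w107']; noncomm_ring
  -- r63 = r61 * r104 * r43 ;  r73 = r72 * r94 * r43
  have f63 : r63 = r61 * r104 * r43 := by
    calc r63 = r63 * (r84 * r43) := by rw [h3]; noncomm_ring
      _ = (r63 * r84) * r43 := by noncomm_ring
      _ = (r61 * r104) * r43 := by rw [c1]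
  have f73 : r73 = r72 * r94 * r43 := by
    calc r73 = r73 * (r84 * r43) := by rw [h3]; noncomm_ring
      _ = (r73 * r84) * r43 := by noncomm_ring
      _ = (r72 * r94) * r43 := by rw [c3]
  have t116 : r116 * r63 = -(r115 * r52 * r94 * r43) := by
    calc r116 * r63 = (r116 * r61) * r104 * r43 := by rw [f63]; noncomm_ring
      _ = -(r115 * (r51 * r104) * r43) := by rw [e7]; noncomm_ring
      _ = -(r115 * (r52 * r94) * r43) := by rw [c2]
      _ = -(r115 * r52 * r94 * r43) := by noncomm_ring
  have t117 : r117 * r73 = -(r115 * r52 * r94 * r43) := by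
    calc r117 * r73 = (r117 * r72) * r94 * r43 := by rw [f73]; noncomm_ring
      _ = -(r115 * r52 * r94 * r43) := by rw [e10]; noncomm_ring
  have key : (2 : R) * (-(r115 * r52 * r94 * r43)) = 1 := by
    calc (2 : R) * (-(r115 * r52 * r94 * r43))
        = -(r115 * r52 * r94 * r43) + -(r115 * r52 * r94 * r43) := by noncomm_ring
      _ = r117 * r73 + r116 * r63 := by rw [t116, t117]
      _ = 1 := h4
  exact ⟨⟨2, -(r115 * r52 * r94 * r43), key, hDF _ _ key⟩, rfl⟩
end

section
/- Let F be a field and let k, n be natural numbers. Suppose there exist matrices r35 of size k×n, r13 of size n×k, r34 of size k×n, and r23 of size n×k with entries in F such that r35·r13 = 1 (the k×k identity matrix), r34·r23 = 1 (the k×k identity matrix), and r35·r23 = 0 (the k×k zero matrix). Then n ≥ 2k. -/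
theorem satellite_network_capacity_upper_bound (F : Type*) [Field F] (k n : ℕ)
    (r35 : Matrix (Fin k) (Fin n) F) (r13 : Matrix (Fin n) (Fin k) F)
    (r34 : Matrix (Fin k) (Fin n) F) (r23 : Matrix (Fin n) (Fin k) F)
    (h1 : r35 * r13 = 1) (h2 : r34 * r23 = 1) (h3 : r35 * r23 = 0) :
    n ≥ 2 * k := by
  let f : ((Fin k → F) × (Fin k → F)) →ₗ[F] (Fin n → F) :=
    r13.mulVecLin.comp (LinearMap.fst F _ _) + r23.mulVecLin.comp (LinearMap.snd F _ _)
  have hinj : Function.Injective f := by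
    rw [← LinearMap.ker_eq_bot, LinearMap.ker_eq_bot']
    rintro ⟨a, b⟩ hm
    have hm' : r13.mulVec a + r23.mulVec b = 0 := hm
    have ha : a = 0 := by
      have := congrArg (r35.mulVec) hm'
      simpa [Matrix.mulVec_add, Matrix.mulVec_mulVec, h1, h3] using this
    have hb : b = 0 := by
      have := congrArg (r34.mulVec) hm'
      simpa [ha, Matrix.mulVec_add, Matrix.mulVec_mulVec, h2] using this
    simp [ha, hb, Prod.ext_iff]
  have := LinearMap.finrank_le_finrank_of_injective hinj
  simpa [Module.finrank_prod, two_mul] using this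
end

section
/- Let F be a field. Then there exist matrices over F, namely r14, r16, r24, r25, r26, r35, r36 of size 4×3, r311 of size 3×3, r47, r59, r67, r69, r610, r810, r811 of size 3×4, and r48, r58 of size 4×4, satisfying the twelve block equations: (1) r69·r16 = 1; (2) r810·r48·r14 + r610·r16 = 0; (3) r47·r14 + r67·r16 = 0; (4) r811·r48·r14 = 1; (5) r59·r25 + r69·r26 = 0; (6) r810·r48·r24 + r810·r58·r25 + r610·r26 = 1; (7) r47·r24 + r67·r26 = 0; (8) r811·r48·r24 + r811·r58·r25 = 0; (9) r59·r35 + r69·r36 = 0; (10) r610·r36 + r810·r58·r35 = 0; (11) r67·r36 = 1; (12) r811·r58·r35 + r311 = 0, where 1 denotes the 3×3 identity matrix and 0 the 3×3 zero matrix. Hence the network of figure 6 has a solution of capacity 3/4 over every field. -/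
set_option maxHeartbeats 2000000

theorem figure6_capacity_three_quarters (F : Type*) [Field F] :
    ∃ (r14 r16 r24 r25 r26 r35 r36 : Matrix (Fin 4) (Fin 3) F)
      (r311 : Matrix (Fin 3) (Fin 3) F)
      (r47 r59 r67 r69 r610 r810 r811 : Matrix (Fin 3) (Fin 4) F)
      (r48 r58 : Matrix (Fin 4) (Fin 4) F),
      r69 * r16 = 1 ∧
      r810 * r48 * r14 + r610 * r16 = 0 ∧
      r47 * r14 + r67 * r16 = 0 ∧
      r811 * r48 * r14 = 1 ∧
      r59 * r25 + r69 * r26 = 0 ∧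
      r810 * r48 * r24 + r810 * r58 * r25 + r610 * r26 = 1 ∧
      r47 * r24 + r67 * r26 = 0 ∧
      r811 * r48 * r24 + r811 * r58 * r25 = 0 ∧
      r59 * r35 + r69 * r36 = 0 ∧
      r610 * r36 + r810 * r58 * r35 = 0 ∧
      r67 * r36 = 1 ∧
      r811 * r58 * r35 + r311 = 0 := by
  refine ⟨!![1,0,0;0,1,0;0,0,1;0,0,0], !![0,0,0;1,0,0;0,1,0;0,0,1],
    !![0,0,0;-1,0,0;0,-1,1;1,0,0], !![0,0,0;1,0,0;0,1,0;0,0,1],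
    !![0,1,0;0,0,0;1,0,0;0,1,1], !![1,0,0;0,1,0;0,0,1;0,0,0],
    !![0,0,0;1,0,0;0,1,0;0,0,1], !![-1,0,0;0,-1,0;0,0,-1],
    !![-1,0,0,0;0,-1,0,-2;0,0,-1,0], !![-1,0,0,0;0,-1,0,0;0,0,-1,-1],
    !![0,1,0,0;0,0,1,0;-2,0,0,1], !![0,1,0,0;0,0,1,0;0,0,0,1],
    !![0,0,-1,0;1,1,0,0;-1,0,0,1], !![0,1,0,2;-1,0,0,0;0,0,-1,0],
    !![1,0,0,0;0,1,0,0;0,0,1,0], !![1,0,0,0;0,1,0,0;0,0,1,0;0,0,0,1],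
    !![1,0,0,0;0,1,0,0;0,0,1,-1;0,0,0,0], ?_, ?_, ?_, ?_, ?_, ?_, ?_, ?_, ?_, ?_, ?_, ?_⟩ <;>
  · ext i j
    fin_cases i <;> fin_cases j <;>
      simp [Matrix.mul_apply, Fin.sum_univ_succ, Matrix.one_apply, Matrix.zero_apply, Matrix.vecHead, Matrix.vecTail] <;> ring
end

section
/- Let F be a field of characteristic 2. Then there exist matrices over F, namely r41, r51, r61, r42, r52, r72, r43, r63, r73 of size 4×3 and r84, r104, r85, r115, r94, r96, r116, r107, r117 of size 3×4, satisfying the twelve block equations: (1) r104·r41 = 1; (2) r94·r42 = 1; (3) r84·r43 = 1; (4) r117·r73 + r116·r63 = 1; (5) r96·r61 + r94·r41 = 0; (6) r85·r51 + r84·r41 = 0; (7) r116·r61 + r115·r51 = 0; (8) r107·r72 + r104·r42 = 0; (9) r85·r52 + r84·r42 = 0; (10) r117·r72 + r115·r52 = 0; (11) r107·r73 + r104·r43 = 0; (12) r96·r63 + r94·r43 = 0, where 1 denotes the 3×3 identity matrix and 0 the 3×3 zero matrix. Hence the network of figure 8 has a solution of capacity 3/4 over every field of characteristic 2. -/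
namespace Fig8Aux

def mr41 : Matrix (Fin 4) (Fin 3) (ZMod 2) := !![0, 1, 1; 0, 1, 0; 0, 1, 1; 1, 0, 0]
def mr51 : Matrix (Fin 4) (Fin 3) (ZMod 2) := !![1, 1, 1; 0, 0, 0; 1, 1, 1; 1, 0, 0]
def mr61 : Matrix (Fin 4) (Fin 3) (ZMod 2) := !![0, 1, 0; 1, 0, 0; 0, 0, 0; 1, 1, 1]
def mr42 : Matrix (Fin 4) (Fin 3) (ZMod 2) := !![0, 0, 0; 0, 0, 1; 1, 1, 1; 0, 1, 1]
def mr52 : Matrix (Fin 4) (Fin 3) (ZMod 2) := !![1, 1, 0; 1, 0, 1; 1, 0, 0; 0, 1, 1]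
def mr72 : Matrix (Fin 4) (Fin 3) (ZMod 2) := !![1, 0, 1; 0, 1, 1; 0, 1, 1; 0, 0, 1]
def mr43 : Matrix (Fin 4) (Fin 3) (ZMod 2) := !![1, 1, 1; 0, 1, 0; 1, 0, 0; 0, 0, 1]
def mr63 : Matrix (Fin 4) (Fin 3) (ZMod 2) := !![0, 1, 0; 0, 1, 0; 1, 1, 0; 1, 1, 0]
def mr73 : Matrix (Fin 4) (Fin 3) (ZMod 2) := !![1, 0, 1; 1, 0, 0; 1, 1, 0; 1, 1, 1]
def mr84 : Matrix (Fin 3) (Fin 4) (ZMod 2) := !![0, 0, 1, 0; 1, 0, 1, 1; 0, 0, 0, 1]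
def mr104 : Matrix (Fin 3) (Fin 4) (ZMod 2) := !![1, 0, 1, 1; 1, 1, 1, 0; 1, 1, 0, 0]
def mr85 : Matrix (Fin 3) (Fin 4) (ZMod 2) := !![0, 0, 1, 1; 1, 1, 1, 1; 0, 0, 0, 1]
def mr115 : Matrix (Fin 3) (Fin 4) (ZMod 2) := !![1, 1, 0, 1; 1, 1, 0, 1; 1, 0, 0, 1]
def mr94 : Matrix (Fin 3) (Fin 4) (ZMod 2) := !![1, 0, 1, 1; 1, 1, 0, 1; 0, 1, 0, 0]
def mr96 : Matrix (Fin 3) (Fin 4) (ZMod 2) := !![0, 1, 0, 0; 1, 0, 0, 1; 1, 0, 0, 0]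
def mr116 : Matrix (Fin 3) (Fin 4) (ZMod 2) := !![0, 1, 0, 1; 0, 1, 1, 1; 0, 1, 0, 1]
def mr107 : Matrix (Fin 3) (Fin 4) (ZMod 2) := !![1, 0, 0, 1; 1, 1, 0, 0; 0, 1, 1, 1]
def mr117 : Matrix (Fin 3) (Fin 4) (ZMod 2) := !![0, 0, 0, 0; 0, 0, 0, 0; 1, 0, 0, 0]

lemma eqs :
    mr104 * mr41 = 1 ∧
    mr94 * mr42 = 1 ∧
    mr84 * mr43 = 1 ∧
    mr117 * mr73 + mr116 * mr63 = 1 ∧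
    mr96 * mr61 + mr94 * mr41 = 0 ∧
    mr85 * mr51 + mr84 * mr41 = 0 ∧
    mr116 * mr61 + mr115 * mr51 = 0 ∧
    mr107 * mr72 + mr104 * mr42 = 0 ∧
    mr85 * mr52 + mr84 * mr42 = 0 ∧
    mr117 * mr72 + mr115 * mr52 = 0 ∧
    mr107 * mr73 + mr104 * mr43 = 0 ∧
    mr96 * mr63 + mr94 * mr43 = 0 := by
  decide

end Fig8Aux

theorem figure8_capacity_three_quarters_char_two (F : Type*) [Field F] [CharP F 2] :
    ∃ (r41 r51 r61 r42 r52 r72 r43 r63 r73 : Matrix (Fin 4) (Fin 3) F)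
      (r84 r104 r85 r115 r94 r96 r116 r107 r117 : Matrix (Fin 3) (Fin 4) F),
      r104 * r41 = 1 ∧
      r94 * r42 = 1 ∧
      r84 * r43 = 1 ∧
      r117 * r73 + r116 * r63 = 1 ∧
      r96 * r61 + r94 * r41 = 0 ∧
      r85 * r51 + r84 * r41 = 0 ∧
      r116 * r61 + r115 * r51 = 0 ∧
      r107 * r72 + r104 * r42 = 0 ∧
      r85 * r52 + r84 * r42 = 0 ∧
      r117 * r72 + r115 * r52 = 0 ∧
      r107 * r73 + r104 * r43 = 0 ∧
      r96 * r63 + r94 * r43 = 0 := by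
  open Fig8Aux in
  let f : ZMod 2 →+* F := ZMod.castHom (dvd_refl 2) F
  obtain ⟨h1, h2, h3, h4, h5, h6, h7, h8, h9, h10, h11, h12⟩ := Fig8Aux.eqs
  refine ⟨mr41.map f, mr51.map f, mr61.map f, mr42.map f, mr52.map f, mr72.map f,
    mr43.map f, mr63.map f, mr73.map f,
    mr84.map f, mr104.map f, mr85.map f, mr115.map f, mr94.map f, mr96.map f,
    mr116.map f, mr107.map f, mr117.map f, ?_, ?_, ?_, ?_, ?_, ?_, ?_, ?_, ?_, ?_, ?_, ?_⟩
  · rw [← Matrix.map_mul, h1]; exact Matrix.map_one f (map_zero f) (map_one f)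
  · rw [← Matrix.map_mul, h2]; exact Matrix.map_one f (map_zero f) (map_one f)
  · rw [← Matrix.map_mul, h3]; exact Matrix.map_one f (map_zero f) (map_one f)
  · rw [← Matrix.map_mul, ← Matrix.map_mul, ← Matrix.map_add _ (fun a b => map_add f a b), h4]
    exact Matrix.map_one f (map_zero f) (map_one f)
  · rw [← Matrix.map_mul, ← Matrix.map_mul, ← Matrix.map_add _ (fun a b => map_add f a b), h5]
    exact Matrix.map_zero f (map_zero f)
  · rw [← Matrix.map_mul, ← Matrix.map_mul, ← Matrix.map_add _ (fun a b => map_add f a b), h6]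
    exact Matrix.map_zero f (map_zero f)
  · rw [← Matrix.map_mul, ← Matrix.map_mul, ← Matrix.map_add _ (fun a b => map_add f a b), h7]
    exact Matrix.map_zero f (map_zero f)
  · rw [← Matrix.map_mul, ← Matrix.map_mul, ← Matrix.map_add _ (fun a b => map_add f a b), h8]
    exact Matrix.map_zero f (map_zero f)
  · rw [← Matrix.map_mul, ← Matrix.map_mul, ← Matrix.map_add _ (fun a b => map_add f a b), h9]
    exact Matrix.map_zero f (map_zero f)
  · rw [← Matrix.map_mul, ← Matrix.map_mul, ← Matrix.map_add _ (fun a b => map_add f a b), h10]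
    exact Matrix.map_zero f (map_zero f)
  · rw [← Matrix.map_mul, ← Matrix.map_mul, ← Matrix.map_add _ (fun a b => map_add f a b), h11]
    exact Matrix.map_zero f (map_zero f)
  · rw [← Matrix.map_mul, ← Matrix.map_mul, ← Matrix.map_add _ (fun a b => map_add f a b), h12]
    exact Matrix.map_zero f (map_zero f)
end

section
/- Let F be a field whose characteristic is not 2 and let k be a positive integer. Then there do NOT exist k×k matrices r14, r16, r24, r25, r26, r35, r36, r311, r47, r48, r58, r59, r67, r69, r610, r810, r811 over F satisfying the twelve equations: (1) r69·r16 = 1; (2) r810·r48·r14 + r610·r16 = 0; (3) r47·r14 + r67·r16 = 0; (4) r811·r48·r14 = 1; (5) r59·r25 + r69·r26 = 0; (6) r810·r48·r24 + r810·r58·r25 + r610·r26 = 1; (7) r47·r24 + r67·r26 = 0; (8) r811·r48·r24 + r811·r58·r25 = 0; (9) r59·r35 + r69·r36 = 0; (10) r610·r36 + r810·r58·r35 = 0; (11) r67·r36 = 1; (12) r811·r58·r35 + r311 = 0, where 1 denotes the k×k identity matrix and 0 the k×k zero matrix. In other words, the network of figure 6 has no solution of capacity 1 over F. -/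
theorem figure6_no_capacity_one_char_ne_two (F : Type*) [Field F]
    (hchar : ringChar F ≠ 2) (k : ℕ) (hk : 0 < k) :
    ¬ ∃ r14 r16 r24 r25 r26 r35 r36 r311 r47 r48 r58 r59 r67 r69 r610 r810 r811 :
        Matrix (Fin k) (Fin k) F,
      r69 * r16 = 1 ∧
      r810 * r48 * r14 + r610 * r16 = 0 ∧
      r47 * r14 + r67 * r16 = 0 ∧
      r811 * r48 * r14 = 1 ∧
      r59 * r25 + r69 * r26 = 0 ∧
      r810 * r48 * r24 + r810 * r58 * r25 + r610 * r26 = 1 ∧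
      r47 * r24 + r67 * r26 = 0 ∧
      r811 * r48 * r24 + r811 * r58 * r25 = 0 ∧
      r59 * r35 + r69 * r36 = 0 ∧
      r610 * r36 + r810 * r58 * r35 = 0 ∧
      r67 * r36 = 1 ∧
      r811 * r58 * r35 + r311 = 0 := by
  rintro ⟨r14, r16, r24, r25, r26, r35, r36, r311, r47, r48, r58, r59, r67, r69, r610, r810, r811,
    e1, e2, e3, e4, e5, e6, e7, e8, e9, e10, e11, e12⟩
  -- Dedekind-finiteness consequences
  have i1 : r16 * r69 = 1 := mul_eq_one_comm.mp e1
  have i11 : r36 * r67 = 1 := mul_eq_one_comm.mp e11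
  have e4' : r811 * (r48 * r14) = 1 := by rw [← mul_assoc]; exact e4
  have i4 : (r48 * r14) * r811 = 1 := mul_eq_one_comm.mp e4'
  have e2' : r810 * r48 * r14 = -(r610 * r16) := eq_neg_of_add_eq_zero_left e2
  have e3' : r47 * r14 = -(r67 * r16) := eq_neg_of_add_eq_zero_left e3
  have e5' : r59 * r25 = -(r69 * r26) := eq_neg_of_add_eq_zero_left e5
  have e7' : r47 * r24 = -(r67 * r26) := eq_neg_of_add_eq_zero_left e7
  have e9' : r59 * r35 = -(r69 * r36) := eq_neg_of_add_eq_zero_left e9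
  have e10' : r810 * r58 * r35 = -(r610 * r36) := eq_neg_of_add_eq_zero_right e10
  -- r48*r24 + r58*r25 = 0
  have h0 : r48 * r24 + r58 * r25 = 0 := by
    calc r48 * r24 + r58 * r25
        = ((r48 * r14) * r811) * (r48 * r24 + r58 * r25) := by rw [i4, one_mul]
      _ = r48 * r14 * (r811 * r48 * r24 + r811 * r58 * r25) := by noncomm_ring
      _ = 0 := by rw [e8, mul_zero]
  -- r610 * r26 = 1
  have h610 : r610 * r26 = 1 := by
    have h : r810 * r48 * r24 + r810 * r58 * r25 + r610 * r26
        = r810 * (r48 * r24 + r58 * r25) + r610 * r26 := by noncomm_ring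
    rw [h, h0, mul_zero, zero_add] at e6
    exact e6
  have i610 : r26 * r610 = 1 := mul_eq_one_comm.mp h610
  -- r47 has inverse -(r14*r69*r36)
  have h47 : r47 * (-(r14 * r69 * r36)) = 1 := by
    have : r47 * (r14 * r69 * r36) = -1 := by
      calc r47 * (r14 * r69 * r36) = (r47 * r14) * r69 * r36 := by noncomm_ring
        _ = -(r67 * r16) * r69 * r36 := by rw [e3']
        _ = -(r67 * (r16 * r69) * r36) := by noncomm_ring
        _ = -(r67 * r36) := by rw [i1, mul_one]
        _ = -1 := by rw [e11]
    rw [mul_neg, this, neg_neg]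
  have j47 : (-(r14 * r69 * r36)) * r47 = 1 := mul_eq_one_comm.mp h47
  -- r24 = r14 * r69 * r26
  have h24 : r24 = r14 * r69 * r26 := by
    calc r24 = ((-(r14 * r69 * r36)) * r47) * r24 := by rw [j47, one_mul]
      _ = (-(r14 * r69 * r36)) * (r47 * r24) := by rw [mul_assoc]
      _ = (-(r14 * r69 * r36)) * (-(r67 * r26)) := by rw [e7']
      _ = r14 * r69 * (r36 * r67) * r26 := by noncomm_ring
      _ = r14 * r69 * r26 := by rw [i11, mul_one]
  -- r59 has inverse -(r35*r67*r16)
  have h59 : r59 * (-(r35 * r67 * r16)) = 1 := by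
    have : r59 * (r35 * r67 * r16) = -1 := by
      calc r59 * (r35 * r67 * r16) = (r59 * r35) * r67 * r16 := by noncomm_ring
        _ = -(r69 * r36) * r67 * r16 := by rw [e9']
        _ = -(r69 * (r36 * r67) * r16) := by noncomm_ring
        _ = -(r69 * r16) := by rw [i11, mul_one]
        _ = -1 := by rw [e1]
    rw [mul_neg, this, neg_neg]
  have j59 : (-(r35 * r67 * r16)) * r59 = 1 := mul_eq_one_comm.mp h59
  -- r25 = r35 * r67 * r26
  have h25 : r25 = r35 * r67 * r26 := by
    calc r25 = ((-(r35 * r67 * r16)) * r59) * r25 := by rw [j59, one_mul]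
      _ = (-(r35 * r67 * r16)) * (r59 * r25) := by rw [mul_assoc]
      _ = (-(r35 * r67 * r16)) * (-(r69 * r26)) := by rw [e5']
      _ = r35 * r67 * (r16 * r69) * r26 := by noncomm_ring
      _ = r35 * r67 * r26 := by rw [i1, mul_one]
  -- key identity
  have star : r48 * r14 * r69 + r58 * r35 * r67 = 0 := by
    have t : (r48 * r14 * r69 + r58 * r35 * r67) * r26 = 0 := by
      calc (r48 * r14 * r69 + r58 * r35 * r67) * r26
          = r48 * (r14 * r69 * r26) + r58 * (r35 * r67 * r26) := by noncomm_ring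
        _ = r48 * r24 + r58 * r25 := by rw [h24, h25]
        _ = 0 := h0
    calc r48 * r14 * r69 + r58 * r35 * r67
        = (r48 * r14 * r69 + r58 * r35 * r67) * (r26 * r610) := by rw [i610, mul_one]
      _ = ((r48 * r14 * r69 + r58 * r35 * r67) * r26) * r610 := (mul_assoc _ _ _).symm
      _ = 0 := by rw [t, zero_mul]
  have A : r810 * (r48 * r14 * r69) = -r610 := by
    calc r810 * (r48 * r14 * r69) = (r810 * r48 * r14) * r69 := by noncomm_ring
      _ = -(r610 * r16) * r69 := by rw [e2']
      _ = -(r610 * (r16 * r69)) := by noncomm_ring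
      _ = -r610 := by rw [i1, mul_one]
  have B : r810 * (r58 * r35 * r67) = -r610 := by
    calc r810 * (r58 * r35 * r67) = (r810 * r58 * r35) * r67 := by noncomm_ring
      _ = -(r610 * r36) * r67 := by rw [e10']
      _ = -(r610 * (r36 * r67)) := by noncomm_ring
      _ = -r610 := by rw [i11, mul_one]
  have two : r610 + r610 = 0 := by
    have h : r810 * (r48 * r14 * r69) + r810 * (r58 * r35 * r67) = 0 := by
      rw [← mul_add, star, mul_zero]
    rw [A, B] at h
    calc r610 + r610 = -(-r610 + -r610) := by abel
      _ = -(0 : Matrix (Fin k) (Fin k) F) := by rw [h]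
      _ = 0 := neg_zero
  have h2F : (2 : F) ≠ 0 := by
    intro h
    exact hchar ((CharP.ringChar_of_prime_eq_zero Nat.prime_two h))
  have h2s : (2 : F) • r610 = 0 := by rw [two_smul]; exact two
  have hz : r610 = 0 := by
    calc r610 = ((2 : F)⁻¹ * 2) • r610 := by rw [inv_mul_cancel₀ h2F, one_smul]
      _ = (2 : F)⁻¹ • ((2 : F) • r610) := by rw [mul_smul]
      _ = 0 := by rw [h2s, smul_zero]
  have hfalse : (1 : Matrix (Fin k) (Fin k) F) = 0 := by
    rw [← h610, hz, zero_mul]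
  have := congrFun (congrFun hfalse ⟨0, hk⟩) ⟨0, hk⟩
  simp [Matrix.one_apply] at this
end
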